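/- Let A = [a_1, ..., a_r] be an admissible list of integers. Then its adjoint satisfies A* = TW_{a_r - 1} ⋆ TW_{a_{r-1} - 1} ⋆ ... ⋆ TW_{a_1 - 1}, where TW_k is the list of k copies of 2 and ⋆ is the operation [..., x] ⋆ [y, ...] = [..., x + y - 1, ...] merging the adjacent endpoints. -/

import Mathlib

/-- Discriminant of a linear chain: determinant of the tridiagonal matrix. -/
def chainD : List ℤ → ℤ
  | [] => 1
  | [a] => a
  | a :: b :: L => a * chainD (b :: L) - chainD L

/-- A list is admissible if it is nonempty and all entries are at least 2. -/
def Admissible (A : List ℤ) : Prop := A ≠ [] ∧ ∀ x ∈ A, 2 ≤ x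

/-- Inductance e(A) = d(Ā)/d(A). -/
def inductance (A : List ℤ) : ℚ := (chainD A.tail : ℚ) / (chainD A : ℚ)

/-- Plumbing concatenation ⋆ of linear chains. -/
def pstar : List ℤ → List ℤ → List ℤ
  | [], B => B
  | A, [] => A
  | [a], b :: B => (a + b - 1) :: B
  | a :: A, B => a :: pstar A B

/-- TW n : the list of n copies of 2. -/
def TW (n : ℕ) : List ℤ := List.replicate n 2

/-! ### Auxiliary lemmas -/

/-- `chainE A = chainD A.tail`, except `chainE [] = 0`. -/
def chainE : List ℤ → ℤ
  | [] => 0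
  | _ :: L => chainD L

lemma chainD_cons (a : ℤ) (L : List ℤ) : chainD (a :: L) = a * chainD L - chainE L := by
  cases L <;> simp [chainD, chainE]

lemma adm_tail {x : ℤ} {xs : List ℤ} (h : Admissible (x :: xs)) (hne : xs ≠ []) :
    Admissible xs :=
  ⟨hne, fun y hy => h.2 y (List.mem_cons_of_mem _ hy)⟩

lemma chainD_bounds : ∀ (A : List ℤ), Admissible A →
    0 < chainD A.tail ∧ chainD A.tail < chainD A := by
  intro A
  induction A with
  | nil => intro h; exact absurd rfl h.1
  | cons a L ih =>
    intro h
    have ha : 2 ≤ a := h.2 a (by simp)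
    cases L with
    | nil => simp only [List.tail_cons]; constructor <;> simp [chainD] <;> omega
    | cons b M =>
      have hb := ih (adm_tail h (by simp))
      simp only [List.tail_cons] at hb ⊢
      obtain ⟨h1, h2⟩ := hb
      have key : chainD (a :: b :: M) = a * chainD (b :: M) - chainD M := rfl
      have h3 : 2 * chainD (b :: M) ≤ a * chainD (b :: M) := by
        apply mul_le_mul_of_nonneg_right ha
        linarith
      constructor <;> linarith

lemma ind_pos {A : List ℤ} (h : Admissible A) : 0 < inductance A ∧ inductance A < 1 := by
  obtain ⟨h1, h2⟩ := chainD_bounds A h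
  have h3 : (0 : ℚ) < (chainD A.tail : ℚ) := by exact_mod_cast h1
  have h4 : (chainD A.tail : ℚ) < (chainD A : ℚ) := by exact_mod_cast h2
  constructor
  · exact div_pos h3 (h3.trans h4)
  · rw [inductance, div_lt_one (h3.trans h4)]; exact h4

lemma inductance_nil : inductance ([] : List ℤ) = 1 := by simp [inductance, chainD]

lemma inductance_single (a : ℤ) : inductance [a] = 1 / (a : ℚ) := by
  simp [inductance, chainD]

lemma inv_inductance (a : ℤ) (L : List ℤ) (h : Admissible (a :: L)) :
    (inductance (a :: L))⁻¹ = (a : ℚ) - (if L = [] then 0 else inductance L) := by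
  cases L with
  | nil =>
    have ha : 2 ≤ a := h.2 a (by simp)
    rw [if_pos rfl, inductance_single, one_div, inv_inv, sub_zero]
  | cons b M =>
    have hadm : Admissible (b :: M) := adm_tail h (by simp)
    obtain ⟨h1, h2⟩ := chainD_bounds _ hadm
    obtain ⟨h3, h4⟩ := chainD_bounds _ h
    simp only [List.tail_cons] at h1 h2 h3 h4
    rw [if_neg (by simp)]
    have key : chainD (a :: b :: M) = a * chainD (b :: M) - chainD M := rfl
    rw [inductance, inductance, key]
    simp only [List.tail_cons]
    have hbm : (chainD (b :: M) : ℚ) ≠ 0 := by exact_mod_cast h3.ne'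
    have hab : ((a * chainD (b :: M) - chainD M : ℤ) : ℚ) ≠ 0 := by
      rw [← key]; exact_mod_cast (h3.trans h4).ne'
    rw [inv_div]
    push_cast at hab ⊢
    field_simp

lemma pstar_nil_right (A : List ℤ) : pstar A [] = A := by
  cases A with
  | nil => rfl
  | cons a A => cases A <;> rfl

lemma pstar_single (a b : ℤ) (B : List ℤ) : pstar [a] (b :: B) = (a + b - 1) :: B := rfl

lemma pstar_cons (a c : ℤ) (A : List ℤ) (b : ℤ) (B : List ℤ) :
    pstar (a :: c :: A) (b :: B) = a :: pstar (c :: A) (b :: B) := rfl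

lemma inductance_cons_ne (a : ℤ) (L : List ℤ) (hL : Admissible L) (ha : 2 ≤ a) :
    inductance (a :: L) = ((a : ℚ) - inductance L)⁻¹ := by
  have hadm : Admissible (a :: L) := by
    refine ⟨by simp, fun x hx => ?_⟩
    rcases List.mem_cons.mp hx with rfl | hx
    · exact ha
    · exact hL.2 x hx
  have h := inv_inductance a L hadm
  rw [if_neg hL.1] at h
  rw [← h, inv_inv]

/-- Injectivity of the inductance on admissible lists. -/
lemma inductance_inj : ∀ (A : List ℤ), Admissible A → ∀ (B : List ℤ), Admissible B →
    inductance A = inductance B → A = B := by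
  intro A
  induction A with
  | nil => intro h; exact absurd rfl h.1
  | cons a L ih =>
    intro hA B hB heq
    obtain ⟨b, M, rfl⟩ : ∃ b M, B = b :: M := by
      cases B with
      | nil => exact absurd rfl hB.1
      | cons b M => exact ⟨b, M, rfl⟩
    have h1 := inv_inductance a L hA
    have h2 := inv_inductance b M hB
    rw [heq, h2] at h1
    set tL : ℚ := if L = [] then 0 else inductance L with htL
    set tM : ℚ := if M = [] then 0 else inductance M with htM
    have hLb : 0 ≤ tL ∧ tL < 1 := by
      rw [htL]
      split
      · norm_num
      · next hne => exact ⟨(ind_pos (adm_tail hA hne)).1.le, (ind_pos (adm_tail hA hne)).2⟩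
    have hMb : 0 ≤ tM ∧ tM < 1 := by
      rw [htM]
      split
      · norm_num
      · next hne => exact ⟨(ind_pos (adm_tail hB hne)).1.le, (ind_pos (adm_tail hB hne)).2⟩
    have hab : a = b := by
      have hd : ((a - b : ℤ) : ℚ) = tL - tM := by push_cast; linarith
      have h5 : ((a - b : ℤ) : ℚ) < 1 := by rw [hd]; linarith [hLb.2, hMb.1]
      have h6 : (-1 : ℚ) < ((a - b : ℤ) : ℚ) := by rw [hd]; linarith [hLb.1, hMb.2]
      have h5' : a - b < 1 := by exact_mod_cast h5
      have h6' : -1 < a - b := by exact_mod_cast h6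
      omega
    subst hab
    have htt : tL = tM := by linarith
    cases L with
    | nil =>
      cases M with
      | nil => rfl
      | cons c M' =>
        exfalso
        have : (0 : ℚ) < tM := by rw [htM, if_neg (by simp)]; exact (ind_pos (adm_tail hB (by simp))).1
        rw [htL, if_pos rfl] at htt
        linarith
    | cons c L' =>
      cases M with
      | nil =>
        exfalso
        have : (0 : ℚ) < tL := by rw [htL, if_neg (by simp)]; exact (ind_pos (adm_tail hA (by simp))).1
        rw [htM, if_pos rfl] at htt
        linarith
      | cons d M' =>
        rw [htL, htM, if_neg (by simp), if_neg (by simp)] at htt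
        have := ih (adm_tail hA (by simp)) (d :: M') (adm_tail hB (by simp)) htt
        rw [this]

lemma step_algebra (u c : ℚ) (hc : 0 < c + u) :
    (2 - (c - 1 + u) / (c + u))⁻¹ = (c + 1 - 1 + u) / (c + 1 + u) := by
  have h1 : c + u ≠ 0 := ne_of_gt hc
  have h2 : 2 - (c - 1 + u) / (c + u) = (c + 1 + u) / (c + u) := by
    field_simp; ring
  rw [h2, inv_div]
  have h3 : c + 1 - 1 + u = c + u := by ring
  rw [h3]

lemma mem_TW {x : ℤ} {n : ℕ} (hx : x ∈ TW n) : x = 2 := List.eq_of_mem_replicate hx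

lemma pstar_TW : ∀ (k : ℕ), 1 ≤ k → ∀ (B : List ℤ), (B = [] ∨ Admissible B) →
    Admissible (pstar (TW k) B) ∧
    inductance (pstar (TW k) B) = ((k : ℚ) - 1 + inductance B) / ((k : ℚ) + inductance B) := by
  intro k hk
  induction k, hk using Nat.le_induction with
  | base =>
    intro B hB
    have hTW1 : TW 1 = [2] := rfl
    rcases hB with rfl | hB
    · rw [hTW1, pstar_nil_right]
      refine ⟨⟨by simp, by simp⟩, ?_⟩
      rw [inductance_nil, inductance_single]
      norm_num
    · obtain ⟨b, B', rfl⟩ : ∃ b B', B = b :: B' := by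
        cases B with
        | nil => exact absurd rfl hB.1
        | cons b B' => exact ⟨b, B', rfl⟩
      have hb : 2 ≤ b := hB.2 b (by simp)
      rw [hTW1, pstar_single]
      constructor
      · refine ⟨by simp, fun x hx => ?_⟩
        rcases List.mem_cons.mp hx with rfl | hx
        · omega
        · exact hB.2 x (List.mem_cons_of_mem _ hx)
      · obtain ⟨h1, h2⟩ := chainD_bounds _ hB
        simp only [List.tail_cons] at h1 h2
        have key1 : chainD (b :: B') = b * chainD B' - chainE B' := chainD_cons b B'
        have key2 : chainD ((2 + b - 1) :: B') = (2 + b - 1) * chainD B' - chainE B' :=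
          chainD_cons _ B'
        have hu : inductance (b :: B') = (chainD B' : ℚ) / (chainD (b :: B') : ℚ) := rfl
        have hgoal : inductance ((2 + b - 1) :: B')
            = (chainD B' : ℚ) / (chainD ((2 + b - 1) :: B') : ℚ) := rfl
        have hd2 : chainD ((2 + b - 1) :: B') = chainD (b :: B') + chainD B' := by
          rw [key1, key2]; ring
        have hB'pos : (0 : ℚ) < (chainD B' : ℚ) := by exact_mod_cast h1
        have hbBpos : (0 : ℚ) < (chainD (b :: B') : ℚ) := by exact_mod_cast h1.trans h2
        have hsum : (chainD (b :: B') : ℚ) + (chainD B' : ℚ) ≠ 0 := by linarith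
        rw [hgoal, hu, hd2]
        push_cast
        field_simp
        ring
  | succ n hn ih =>
    intro B hB
    obtain ⟨m, rfl⟩ : ∃ m, n = m + 1 := ⟨n - 1, by omega⟩
    have hTW : TW (m + 1 + 1) = 2 :: 2 :: TW m := by
      simp [TW, List.replicate_succ]
    have hTW' : TW (m + 1) = 2 :: TW m := by simp [TW, List.replicate_succ]
    rcases hB with rfl | hB
    · rw [pstar_nil_right]
      have ihk := ih [] (Or.inl rfl)
      rw [pstar_nil_right] at ihk
      obtain ⟨hadm, hind⟩ := ihk
      refine ⟨⟨by rw [hTW]; simp, fun x hx => le_of_eq (mem_TW hx).symm⟩, ?_⟩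
      have h2e : inductance (TW (m + 1 + 1)) = (((2 : ℤ) : ℚ) - inductance (TW (m + 1)))⁻¹ := by
        rw [hTW, ← hTW']
        exact inductance_cons_ne 2 (TW (m + 1)) hadm le_rfl
      rw [h2e, hind, inductance_nil]
      push_cast
      exact step_algebra 1 ((m : ℚ) + 1) (by positivity)
    · obtain ⟨b, B', rfl⟩ : ∃ b B', B = b :: B' := by
        cases B with
        | nil => exact absurd rfl hB.1
        | cons b B' => exact ⟨b, B', rfl⟩
      rw [hTW, pstar_cons, ← hTW']
      obtain ⟨hadm, hind⟩ := ih (b :: B') (Or.inr hB)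
      have hQadm : Admissible (2 :: pstar (TW (m + 1)) (b :: B')) := by
        refine ⟨by simp, fun x hx => ?_⟩
        rcases List.mem_cons.mp hx with rfl | hx
        · exact le_refl 2
        · exact hadm.2 x hx
      refine ⟨hQadm, ?_⟩
      rw [inductance_cons_ne 2 _ hadm le_rfl, hind]
      have hu := ind_pos hB
      push_cast
      exact step_algebra (inductance (b :: B')) ((m : ℚ) + 1) (by linarith [hu.1])

lemma foldr_spec : ∀ (R : List ℤ), Admissible R →
    Admissible ((R.map (fun a => TW (a - 1).toNat)).foldr pstar []) ∧
    inductance ((R.map (fun a => TW (a - 1).toNat)).foldr pstar []) = 1 - inductance R := by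
  intro R
  induction R with
  | nil => intro h; exact absurd rfl h.1
  | cons a R' ih =>
    intro hR
    have ha : 2 ≤ a := hR.2 a (by simp)
    have hk1 : 1 ≤ (a - 1).toNat := by omega
    have hkc : (((a - 1).toNat : ℕ) : ℚ) = (a : ℚ) - 1 := by
      have h0 : ((a - 1).toNat : ℤ) = a - 1 := Int.toNat_of_nonneg (by omega)
      have h1 := congrArg (fun z : ℤ => (z : ℚ)) h0
      push_cast at h1
      exact_mod_cast h1
    simp only [List.map_cons, List.foldr_cons]
    cases R' with
    | nil =>
      simp only [List.map_nil, List.foldr_nil]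
      obtain ⟨hadm, hind⟩ := pstar_TW _ hk1 [] (Or.inl rfl)
      refine ⟨hadm, ?_⟩
      rw [hind, inductance_nil, inductance_single, hkc]
      have ha' : (0 : ℚ) < (a : ℚ) := by exact_mod_cast (by omega : (0 : ℤ) < a)
      field_simp
      rw [show (a : ℚ) - 1 + 1 = a by ring, mul_div_cancel_left₀ _ ha'.ne']
      ring
    | cons c R'' =>
      have hR' : Admissible (c :: R'') := adm_tail hR (by simp)
      obtain ⟨hadm, hind⟩ := ih hR'
      obtain ⟨hadm2, hind2⟩ := pstar_TW _ hk1 _ (Or.inr hadm)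
      refine ⟨hadm2, ?_⟩
      rw [hind2, hind, hkc]
      have hec := ind_pos hR'
      rw [inductance_cons_ne a (c :: R'') hR' ha]
      set e := inductance (c :: R'') with hedef
      have hne : ((a : ℤ) : ℚ) - e ≠ 0 := by
        have : (2 : ℚ) ≤ ((a : ℤ) : ℚ) := by exact_mod_cast ha
        push_cast
        linarith [hec.2]
      push_cast at hne ⊢
      have hne' : (a : ℚ) - e ≠ 0 := hne
      have hne'' : (a : ℚ) - 1 + (1 - e) ≠ 0 := by intro h0; apply hne'; linarith
      field_simp
      ring

theorem adjoint_eq_pstar_TW (A As : List ℤ) (hA : Admissible A) (hAs : Admissible As)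
    (h : inductance As = 1 - inductance A.reverse) :
    As = (A.reverse.map (fun a => TW (a - 1).toNat)).foldr pstar [] := by
  have hArev : Admissible A.reverse :=
    ⟨by simp [hA.1], fun x hx => hA.2 x (List.mem_reverse.mp hx)⟩
  obtain ⟨hadm, hind⟩ := foldr_spec A.reverse hArev
  exact inductance_inj As hAs _ hadm (by rw [h, hind])
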